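/- For every τ ∈ [0,1]^N, one has V(τ) = 0 if and only if τ ∈ A_s; that is, the function V is positive definite with respect to the synchronization set A_s. -/

import Mathlib

open scoped BigOperators Classical ENNReal

namespace PCO

/-- Edge sets of digraphs on the vertex set `Fin N`. -/
abbrev Edges (N : ℕ) := Finset (Fin N × Fin N)

/-- A digraph is simple if it has no self-loops. -/
def Simple (N : ℕ) (E : Edges N) : Prop := ∀ e ∈ E, e.1 ≠ e.2

/-- The set of out-edges of vertex `i` in the digraph with edge set `E`. -/
def outEdges (N : ℕ) (E : Edges N) (i : Fin N) : Edges N := E.filter (fun e => e.1 = i)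

/-- `E'` is (the edge set of) a feasible subgraph of `E`: it is a subgraph on the same
vertex set containing, for each vertex `i`, all out-edges of `i` or none of them. -/
def Feasible (N : ℕ) (E E' : Edges N) : Prop :=
  E' ⊆ E ∧ ∀ i : Fin N, outEdges N E i ⊆ E' ∨ Disjoint (outEdges N E i) E'

/-- The binary phase update rule `R_j`, with threshold `rj`, applied to the state `s`. -/
def Rset (rj s : ℝ) : Set ℝ :=
  if s < rj then {0} else if s = rj then ({0, 1} : Set ℝ) else {1}

/-- A solution of the PCO network over the sequence `ξ` of (feasible) subgraphs of `E`
(`ξ k` is the graph used at the `k`-th jump, `k ≥ 1`): an unbounded nondecreasing sequence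
of jump times `tJ` with `tJ 0 = 0`, together with the states `st k = τ(tJ k, k)` just after
each jump; the state at a hybrid time `(t,k)` is recovered by the flow, see `Sol.val`. -/
structure Sol (N : ℕ) (T : ℝ) (r : Fin N → ℝ) (E : Edges N) (ξ : ℕ → Edges N) where
  tJ : ℕ → ℝ
  st : ℕ → Fin N → ℝ
  tJ0 : tJ 0 = 0
  mono : Monotone tJ
  unbdd : ∀ M : ℝ, ∃ k, M < tJ k
  box : ∀ k i, st k i ∈ Set.Icc (0:ℝ) 1
  box' : ∀ k i, st k i + (tJ (k+1) - tJ k) / T ∈ Set.Icc (0:ℝ) 1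
  jump : ∀ k, ∃ i : Fin N,
      st k i + (tJ (k+1) - tJ k) / T = 1 ∧
      st (k+1) i = 0 ∧
      ∀ j, j ≠ i →
        ((i, j) ∈ ξ (k+1) → st (k+1) j ∈ Rset (r j) (st k j + (tJ (k+1) - tJ k) / T)) ∧
        ((i, j) ∉ ξ (k+1) → st (k+1) j = st k j)

variable {N : ℕ} {T : ℝ} {r : Fin N → ℝ} {E : Edges N} {ξ : ℕ → Edges N}

/-- The state `τ_i(t,k)` of agent `i` at the hybrid time `(t,k)`. -/
noncomputable def Sol.val (sol : Sol N T r E ξ) (t : ℝ) (k : ℕ) (i : Fin N) : ℝ :=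
  sol.st k i + (t - sol.tJ k) / T

/-- `(t,k)` is a hybrid time of the solution. -/
def Sol.HT (sol : Sol N T r E ξ) (t : ℝ) (k : ℕ) : Prop :=
  sol.tJ k ≤ t ∧ t ≤ sol.tJ (k+1)

/-- The synchronization set `A_s = {μ·1_N : μ ∈ [0,1]} ∪ {0,1}^N`. -/
def SyncSet (N : ℕ) : Set (Fin N → ℝ) :=
  {x | ∃ μ ∈ Set.Icc (0:ℝ) 1, x = fun _ => μ} ∪ {x | ∀ i, x i = 0 ∨ x i = 1}

/-- There is a directed path (walk) of length `n` from `i` to `j` in `E`. -/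
def reachIn (N : ℕ) (E : Edges N) : ℕ → Fin N → Fin N → Prop
  | 0, i, j => i = j
  | n+1, i, j => ∃ m : Fin N, (i, m) ∈ E ∧ reachIn N E n m j

/-- `i` is a root: every vertex is reachable from `i`. -/
def IsRoot (N : ℕ) (E : Edges N) (i : Fin N) : Prop := ∀ j : Fin N, ∃ n, reachIn N E n i j

/-- The depth of `j` with respect to `i`: the length of a shortest directed path from `i` to `j`. -/
noncomputable def depth (N : ℕ) (E : Edges N) (i j : Fin N) : ℕ :=
  sInf {n | reachIn N E n i j}

/-- `q*`, the maximum depth of a vertex with respect to the root `istar`. -/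
noncomputable def maxDepth (N : ℕ) (E : Edges N) (istar : Fin N) : ℕ :=
  Finset.univ.sup (fun j => depth N E istar j)

/-- `dep(G)`: the maximum of `q*` over all roots. -/
noncomputable def depG (N : ℕ) (E : Edges N) : ℕ :=
  Finset.univ.sup (fun i => if IsRoot N E i then maxDepth N E i else 0)

/-- `G_q(i*)`: the feasible subgraph of `E` whose edges are the out-edges of the vertices
at depth `q` with respect to `istar`. -/
noncomputable def Gq (N : ℕ) (E : Edges N) (istar : Fin N) (q : ℕ) : Edges N :=
  E.filter (fun e => depth N E istar e.1 = q)

/-- `r̲ = min_i r_i`. -/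
noncomputable def rmin (N : ℕ) (r : Fin N → ℝ) : ℝ := ⨅ i, r i

/-- `ℓ* = N(⌊1/r̲⌋ + 1)`. -/
noncomputable def ellStar (N : ℕ) (r : Fin N → ℝ) : ℕ :=
  N * (Nat.floor (1 / rmin N r) + 1)

/-- `L* = ℓ* q*`: the length of the synchronization string. -/
noncomputable def Lstar (N : ℕ) (r : Fin N → ℝ) (E : Edges N) (istar : Fin N) : ℕ :=
  ellStar N r * maxDepth N E istar

/-- The sequence `ξ` contains the synchronization string `ζ(i*)` as the consecutive block
`φ_{k₀} ⋯ φ_{k₀+L*−1}`: i.e. `φ_{k₀+qℓ*+m} = G_q(i*)` for `0 ≤ q ≤ q*−1`, `0 ≤ m ≤ ℓ*−1`. -/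
noncomputable def HasZetaAt (N : ℕ) (r : Fin N → ℝ) (E : Edges N) (istar : Fin N)
    (ξ : ℕ → Edges N) (k₀ : ℕ) : Prop :=
  ∀ q < maxDepth N E istar, ∀ m < ellStar N r,
    ξ (k₀ + q * ellStar N r + m) = Gq N E istar q

/-- Partial synchronization set `A_q(i*)`: all agents of depth `≤ q` with respect to `i*`
have a common state in `[0,1]`, or all have states in `{0,1}`; the remaining agents have
states in `[0,1]`. -/
noncomputable def Aq (N : ℕ) (E : Edges N) (istar : Fin N) (q : ℕ) : Set (Fin N → ℝ) :=
  {x | (∀ i, x i ∈ Set.Icc (0:ℝ) 1) ∧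
    ((∃ μ ∈ Set.Icc (0:ℝ) 1, ∀ i, depth N E istar i ≤ q → x i = μ) ∨
      (∀ i, depth N E istar i ≤ q → x i = 0 ∨ x i = 1))}

/-- The Lyapunov-like function `V`: one minus the largest circular gap between the
(sorted) entries of `τ`, when the endpoints of `[0,1]` are identified. -/
noncomputable def Vfun (N : ℕ) (hN : 0 < N) (τ : Fin N → ℝ) : ℝ :=
  1 - Finset.univ.sup' (Finset.univ_nonempty_iff.mpr ⟨⟨0, hN⟩⟩)
      (fun i : Fin N =>
        if h : (i : ℕ) + 1 < N then
          (τ ∘ Tuple.sort τ) ⟨(i : ℕ) + 1, h⟩ - (τ ∘ Tuple.sort τ) i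
        else 1 - (τ ∘ Tuple.sort τ) i + (τ ∘ Tuple.sort τ) ⟨0, hN⟩)

/-- `i` has at least one out-neighbor in `E`. -/
def HasOut (N : ℕ) (E : Edges N) (i : Fin N) : Prop := ∃ j : Fin N, (i, j) ∈ E

/-- The set `V*` of vertices of `E` having at least one out-neighbor. -/
abbrev Vstar (N : ℕ) (E : Edges N) := {i : Fin N // HasOut N E i}

/-- The feasible subgraph corresponding to `v : V* → {0,1}`: its edge set is the union of
the out-edge sets of those `i ∈ V*` with `v i = 1`. -/
noncomputable def graphOf (N : ℕ) (E : Edges N) (v : Vstar N E → Bool) : Edges N :=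
  E.filter (fun e => (if h : HasOut N E e.1 then v ⟨e.1, h⟩ else false) = true)

/-- The sample space `Ω = ({0,1}^{V*})^{ℕ}`; `ω k` represents `ω_{k+1}`. -/
abbrev Omega (N : ℕ) (E : Edges N) := ℕ → (Vstar N E → Bool)

open MeasureTheory in
/-- The Bernoulli(`p`) measure on `{0,1}`. -/
noncomputable def bern (p : ℝ) (hp : p ≤ 1) : Measure Bool :=
  (PMF.bernoulli (Real.toNNReal p) (Real.toNNReal_le_one.mpr hp)).toMeasure

open MeasureTheory in
/-- The measure `μ_p` on `{0,1}^{V*}` making coordinates i.i.d. Bernoulli(`p`). -/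
noncomputable def muP (N : ℕ) (E : Edges N) (p : ℝ) (hp : p ≤ 1) :
    Measure (Vstar N E → Bool) :=
  Measure.pi (fun _ => bern p hp)

open MeasureTheory in
/-- `P` is the countable product of copies of `μ_p` on `Ω`: the probability of every
cylinder event is the corresponding product. -/
def IsProductMeasure (N : ℕ) (E : Edges N) (p : ℝ) (hp : p ≤ 1)
    (P : Measure (Omega N E)) : Prop :=
  ∀ (S : Finset ℕ) (f : ℕ → Set (Vstar N E → Bool)),
    P {ω | ∀ k ∈ S, ω k ∈ f k} = ∏ k ∈ S, muP N E p hp (f k)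

/-- The sample path `ω` contains the synchronization string `ζ(i*)` at positions
`ω_{ℓ+1} ⋯ ω_{ℓ+L*}`. -/
noncomputable def HasZetaAtOmega (N : ℕ) (r : Fin N → ℝ) (E : Edges N) (istar : Fin N)
    (ω : Omega N E) (ℓ : ℕ) : Prop :=
  ∀ q < maxDepth N E istar, ∀ m < ellStar N r,
    graphOf N E (ω (ℓ + q * ellStar N r + m)) = Gq N E istar q

/-- The sequence of feasible subgraphs `ξ = ω` determined by the sample path `ω`
(`seqOf ω k = φ_k` for `k ≥ 1`). -/
noncomputable def seqOf (N : ℕ) (E : Edges N) (ω : Omega N E) : ℕ → Edges N :=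
  fun k => graphOf N E (ω (k - 1))

/-- The sync-time `T*` of a solution: the infimum of the (continuous) times `t ≥ 0` at
which the state lies in the synchronization set (`∞` if there is no such time). -/
noncomputable def Sol.syncTime (sol : Sol N T r E ξ) : ℝ≥0∞ :=
  sInf {x : ℝ≥0∞ | ∃ t : ℝ, ∃ k : ℕ, 0 ≤ t ∧ sol.HT t k ∧
    (fun i => sol.val t k i) ∈ SyncSet N ∧ x = ENNReal.ofReal t}

/-- Euclidean distance from a point of `ℝ^N` to a set. -/
noncomputable def eucDist (N : ℕ) (x : Fin N → ℝ) (S : Set (Fin N → ℝ)) : ℝ :=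
  Metric.infDist ((WithLp.equiv 2 (Fin N → ℝ)).symm x)
    ((WithLp.equiv 2 (Fin N → ℝ)).symm '' S)

theorem stmt15 (N : ℕ) (hN : 0 < N) (τ : Fin N → ℝ)
    (hτ : ∀ i, τ i ∈ Set.Icc (0:ℝ) 1) :
    Vfun N hN τ = 0 ↔ τ ∈ SyncSet N := by
  have hmono : Monotone (τ ∘ Tuple.sort τ) := Tuple.monotone_sort τ
  unfold Vfun
  set s : Fin N → ℝ := τ ∘ Tuple.sort τ with hs
  have hbox : ∀ i, s i ∈ Set.Icc (0:ℝ) 1 := fun i => hτ _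
  set g : Fin N → ℝ := fun i : Fin N =>
      if h : (i : ℕ) + 1 < N then s ⟨(i : ℕ) + 1, h⟩ - s i
      else 1 - s i + s ⟨0, hN⟩ with hg
  have hτs : ∀ j, τ j = s ((Tuple.sort τ)⁻¹ j) := by
    intro j
    simp [hs, Function.comp]
  have key : Finset.univ.sup' (Finset.univ_nonempty_iff.mpr ⟨⟨0, hN⟩⟩) g = 1 ↔
      τ ∈ SyncSet N := by
    constructor
    · intro hS
      obtain ⟨i0, -, hi0⟩ := Finset.exists_mem_eq_sup'
        (Finset.univ_nonempty_iff.mpr ⟨⟨0, hN⟩⟩) g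
      have hgi0 : g i0 = 1 := by rw [← hi0]; exact hS
      by_cases h : (i0 : ℕ) + 1 < N
      · have heq : s ⟨(i0 : ℕ) + 1, h⟩ - s i0 = 1 := by
          simpa [hg, dif_pos h] using hgi0
        have hi00 : s i0 = 0 := le_antisymm
          (by have := (hbox ⟨(i0 : ℕ) + 1, h⟩).2; linarith) (hbox i0).1
        have hi11 : s ⟨(i0 : ℕ) + 1, h⟩ = 1 := by linarith
        have hall : ∀ j, s j = 0 ∨ s j = 1 := by
          intro j
          rcases le_or_gt (j : ℕ) (i0 : ℕ) with hj | hj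
          · left
            have := hmono (show j ≤ i0 from hj)
            have := (hbox j).1
            linarith
          · right
            have := hmono (show (⟨(i0 : ℕ) + 1, h⟩ : Fin N) ≤ j from by
              simp [Fin.le_def]; omega)
            have := (hbox j).2
            linarith
        right
        intro j
        rw [hτs j]
        exact hall _
      · have heq : 1 - s i0 + s ⟨0, hN⟩ = 1 := by
          simpa [hg, dif_neg h] using hgi0
        have hconst : ∀ j, s j = s ⟨0, hN⟩ := by
          intro j
          have h1 : s ⟨0, hN⟩ ≤ s j := hmono (by simp [Fin.le_def])
          have h2 : s j ≤ s i0 := hmono (show j ≤ i0 by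
            have := j.isLt; rw [Fin.le_def]; omega)
          linarith
        left
        exact ⟨s ⟨0, hN⟩, hbox _, funext fun j => by rw [hτs j, hconst]⟩
    · intro hτA
      apply le_antisymm
      · apply Finset.sup'_le
        intro i _
        by_cases h : (i : ℕ) + 1 < N
        · have h1 := (hbox ⟨(i : ℕ) + 1, h⟩).2
          have h2 := (hbox i).1
          simp only [hg, dif_pos h]
          linarith
        · have h1 : s ⟨0, hN⟩ ≤ s i := hmono (by simp [Fin.le_def])
          simp only [hg, dif_neg h]
          linarith
      · have hlast : ((N : ℕ) - 1) < N := by omega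
        rcases hτA with ⟨μ, hμ, hτμ⟩ | hτ01
        · have hallμ : ∀ j, s j = μ := by
            intro j; simp [hs, Function.comp, hτμ]
          have : g ⟨N - 1, hlast⟩ = 1 := by
            have hnot : ¬ (((⟨N - 1, hlast⟩ : Fin N) : ℕ) + 1 < N) := by
              simp only [Fin.val_mk]; omega
            simp only [hg, dif_neg hnot, hallμ]
            ring
          calc (1 : ℝ) = g ⟨N - 1, hlast⟩ := this.symm
            _ ≤ _ := Finset.le_sup' g (Finset.mem_univ _)
        · have hall : ∀ j, s j = 0 ∨ s j = 1 := fun j => hτ01 _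
          by_cases hc : s ⟨N - 1, hlast⟩ = s ⟨0, hN⟩
          · have : g ⟨N - 1, hlast⟩ = 1 := by
              have hnot : ¬ (((⟨N - 1, hlast⟩ : Fin N) : ℕ) + 1 < N) := by
                simp only [Fin.val_mk]; omega
              simp only [hg, dif_neg hnot, hc]
              ring
            calc (1 : ℝ) = g ⟨N - 1, hlast⟩ := this.symm
              _ ≤ _ := Finset.le_sup' g (Finset.mem_univ _)
          · have hle : s ⟨0, hN⟩ ≤ s ⟨N - 1, hlast⟩ := hmono (by simp [Fin.le_def])
            have h0 : s ⟨0, hN⟩ = 0 := by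
              rcases hall ⟨0, hN⟩ with h | h
              · exact h
              · exfalso
                rcases hall ⟨N - 1, hlast⟩ with h' | h'
                · rw [h, h'] at hle; linarith
                · exact hc (h'.trans h.symm)
            have h1 : s ⟨N - 1, hlast⟩ = 1 := by
              rcases hall ⟨N - 1, hlast⟩ with h' | h'
              · exact absurd (h'.trans h0.symm) hc
              · exact h'
            set Tset := Finset.univ.filter (fun j : Fin N => s j = 1) with hT
            have hTne : Tset.Nonempty := ⟨⟨N - 1, hlast⟩, by simp [hT, h1]⟩
            set j0 := Tset.min' hTne with hj0
            have hj0mem : s j0 = 1 := by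
              have := Tset.min'_mem hTne
              simpa [hT] using this
            have hj0pos : 0 < (j0 : ℕ) := by
              rcases Nat.eq_zero_or_pos (j0 : ℕ) with h' | h'
              · exfalso
                have : j0 = ⟨0, hN⟩ := Fin.ext h'
                rw [this, h0] at hj0mem
                linarith
              · exact h'
            have hprevlt : (j0 : ℕ) - 1 < N := by omega
            set prev : Fin N := ⟨(j0 : ℕ) - 1, hprevlt⟩ with hprev
            have hprev0 : s prev = 0 := by
              rcases hall prev with h' | h'
              · exact h'
              · exfalso
                have hmem : prev ∈ Tset := by simp [hT, h']
                have := Tset.min'_le prev hmem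
                rw [← hj0] at this
                have : (j0 : ℕ) ≤ (prev : ℕ) := this
                simp [hprev] at this
                omega
            have hsucc : (prev : ℕ) + 1 < N := by
              have := j0.isLt
              simp only [hprev]
              omega
            have hfin : (⟨(prev : ℕ) + 1, hsucc⟩ : Fin N) = j0 := by
              apply Fin.ext
              simp [hprev]
              omega
            have : g prev = 1 := by
              rw [hg]
              simp only [dif_pos hsucc]
              rw [hfin, hj0mem, hprev0]
              ring
            calc (1 : ℝ) = g prev := this.symm
              _ ≤ _ := Finset.le_sup' g (Finset.mem_univ _)
  constructor
  · intro h
    exact key.mp (by linarith)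
  · intro h
    have := key.mpr h
    linarith

end PCO
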